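/- For every k ≥ 1, the set A = ∪_{i=1}^{k} { (i−1)·2^k + 1, (i−1)·2^k + 1 + 2^{i−1}, (i−1)·2^k + 2^i } is an attractor of the 1D string rlin(E_k); hence γ(rlin(E_k)) ≤ 3k, while γ(E_k) ≥ 2^k (every 2D attractor of E_k has at least 2^k positions). -/

import Mathlib

/-!
Statement 17: For every `k ≥ 1`, the set
`A = ∪_{i=1}^{k} {(i−1)·2^k + 1, (i−1)·2^k + 1 + 2^{i−1}, (i−1)·2^k + 2^i}`
(1-based positions; 0-based: `∪_{i=0}^{k-1} {i·2^k, i·2^k + 2^i, i·2^k + 2^{i+1} − 1}`)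
is an attractor of the 1D string `rlin(E_k)` of length `k·2^k`; hence
`γ(rlin(E_k)) ≤ 3k`, while every 2D attractor of `E_k` has at least `2^k`
positions, i.e. `γ(E_k) ≥ 2^k`.  Here `E_k[i][j] = testBit j i` is the binary 2D
string with `k` rows and `2^k` columns whose `j`-th column is the `k`-bit binary
representation of `j`, and `rlin` is row-major linearization.
-/

/-- Row-major linearization of an `n`-column 2D string (0-based). -/
def rlin {α : Type*} (M : ℕ → ℕ → α) (n : ℕ) : ℕ → α :=
  fun t => M (t / n) (t % n)

/-- `Γ` is an attractor for the 1D string `S` of length `N` (0-based positions). -/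
def IsAttractor1D {α : Type*} (S : ℕ → α) (N : ℕ) (Γ : Finset ℕ) : Prop :=
  (∀ x ∈ Γ, x < N) ∧
  ∀ len p, 1 ≤ len → p + len ≤ N →
    ∃ p', p' + len ≤ N ∧ (∀ t, t < len → S (p' + t) = S (p + t)) ∧
      ∃ x ∈ Γ, p' ≤ x ∧ x < p' + len

/-- `γ(S)` for a 1D string `S` of length `N`. -/
noncomputable def gamma1D {α : Type*} (S : ℕ → α) (N : ℕ) : ℕ :=
  sInf {c | ∃ Γ : Finset ℕ, IsAttractor1D S N Γ ∧ Γ.card = c}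

/-- `Γ` is an attractor for the `m × n` 2D string `M`. -/
def IsAttractor {α : Type*} (M : ℕ → ℕ → α) (m n : ℕ) (Γ : Finset (ℕ × ℕ)) : Prop :=
  (∀ q ∈ Γ, q.1 < m ∧ q.2 < n) ∧
  ∀ k₁ k₂ i j, 1 ≤ k₁ → 1 ≤ k₂ → i + k₁ ≤ m → j + k₂ ≤ n →
    ∃ i' j', i' + k₁ ≤ m ∧ j' + k₂ ≤ n ∧
      (∀ a b, a < k₁ → b < k₂ → M (i' + a) (j' + b) = M (i + a) (j + b)) ∧
      ∃ q ∈ Γ, i' ≤ q.1 ∧ q.1 < i' + k₁ ∧ j' ≤ q.2 ∧ q.2 < j' + k₂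

/-- The 2D string `E_k` (independent of `k` as a total function):
`E i j` is the `i`-th binary digit of `j`. -/
def Emat : ℕ → ℕ → Bool := fun i j => Nat.testBit j i

/-- The attractor candidate of `rlin(E_k)` (0-based positions). -/
def attrSet (k : ℕ) : Finset ℕ :=
  (Finset.range k).biUnion
    (fun i => {i * 2 ^ k, i * 2 ^ k + 2 ^ i, i * 2 ^ k + 2 ^ (i + 1) - 1})


/-- `testBit` of a number below `2^(r+1)` is just the comparison with `2^r`. -/
lemma testBit_of_lt {r y : ℕ} (h : y < 2 ^ (r + 1)) :
    Nat.testBit y r = decide (2 ^ r ≤ y) := by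
  have h2 : 2 ^ (r + 1) = 2 ^ r * 2 := pow_succ 2 r
  rw [Nat.testBit_eq_decide_div_mod_eq]
  rcases Nat.lt_or_ge y (2 ^ r) with h1 | h1
  · rw [Nat.div_eq_of_lt h1]
    simp [Nat.not_le.mpr h1]
  · have hd : y / 2 ^ r = 1 :=
      Nat.div_eq_of_lt_le (by simpa using h1) (by omega)
    simp [hd, h1]

lemma testBit_period (x r : ℕ) :
    Nat.testBit x r = Nat.testBit (x % 2 ^ (r + 1)) r := by
  rw [Nat.testBit_mod_two_pow]
  simp

lemma eval_row {k : ℕ} (r c : ℕ) (hc : c < 2 ^ k) :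
    rlin Emat (2 ^ k) (r * 2 ^ k + c) = Nat.testBit c r := by
  have hpos : 0 < 2 ^ k := Nat.pow_pos (by norm_num)
  have hdiv : (r * 2 ^ k + c) / 2 ^ k = r := by
    rw [Nat.mul_comm, Nat.mul_add_div hpos, Nat.div_eq_of_lt hc, Nat.add_zero]
  have hmod : (r * 2 ^ k + c) % 2 ^ k = c := by
    rw [Nat.add_comm, Nat.add_mul_mod_self_right, Nat.mod_eq_of_lt hc]
  simp [rlin, Emat, hdiv, hmod]

lemma mem_attrSet {k i x : ℕ} (hi : i < k)
    (hx : x = i * 2 ^ k ∨ x = i * 2 ^ k + 2 ^ i ∨ x = i * 2 ^ k + 2 ^ (i + 1) - 1) :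
    x ∈ attrSet k := by
  simp only [attrSet, Finset.mem_biUnion, Finset.mem_range, Finset.mem_insert,
    Finset.mem_singleton]
  exact ⟨i, hi, hx⟩

lemma attr17 (k : ℕ) (hk : 1 ≤ k) :
    IsAttractor1D (rlin Emat (2 ^ k)) (k * 2 ^ k) (attrSet k) := by
  have hpos : 0 < 2 ^ k := Nat.pow_pos (by norm_num)
  constructor
  · -- all attractor positions are in range
    intro x hx
    simp only [attrSet, Finset.mem_biUnion, Finset.mem_range, Finset.mem_insert,
      Finset.mem_singleton] at hx
    obtain ⟨i, hi, hx⟩ := hx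
    have h1 : 2 ^ (i + 1) ≤ 2 ^ k := Nat.pow_le_pow_right (by norm_num) hi
    have h2 : 2 ^ i < 2 ^ (i + 1) := Nat.pow_lt_pow_right (by norm_num) (Nat.lt_succ_self i)
    have h3 : (i + 1) * 2 ^ k ≤ k * 2 ^ k := Nat.mul_le_mul_right _ hi
    have h4 : 0 < 2 ^ (i + 1) := Nat.pow_pos (by norm_num)
    have h5 : (i + 1) * 2 ^ k = i * 2 ^ k + 2 ^ k := by ring
    rcases hx with rfl | rfl | rfl <;> omega
  · -- attractor property
    intro len p hlen hpl
    set r := p / 2 ^ k with hr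
    set c := p % 2 ^ k with hc
    have hpc : p = r * 2 ^ k + c := (Nat.div_add_mod p (2 ^ k)).symm.trans (by rw [hr, hc]; ring)
    have hck : c < 2 ^ k := Nat.mod_lt _ hpos
    have hrk : r < k := by
      have : p < k * 2 ^ k := by omega
      exact Nat.div_lt_of_lt_mul (by rwa [Nat.mul_comm] at this)
    have hsucc : 2 ^ (r + 1) ≤ 2 ^ k := Nat.pow_le_pow_right (by norm_num) hrk
    have hps : (2:ℕ) ^ (r + 1) = 2 ^ r * 2 := pow_succ 2 r
    have hrp : 0 < 2 ^ r := Nat.pow_pos (by norm_num)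
    have hrk2 : (r + 1) * 2 ^ k ≤ k * 2 ^ k := Nat.mul_le_mul_right _ hrk
    have hx1 : (r + 1) * 2 ^ k = r * 2 ^ k + 2 ^ k := by ring
    rcases Nat.lt_or_ge (2 ^ k) (c + len) with hcross | hin
    · -- substring crosses a row boundary: it contains position (r+1)*2^k
      refine ⟨p, hpl, fun t _ => rfl, (r + 1) * 2 ^ k, ?_, by omega, ?_⟩
      · refine mem_attrSet ?_ (Or.inl rfl)
        have : (r + 1) * 2 ^ k < k * 2 ^ k := by omega
        exact lt_of_mul_lt_mul_right this (Nat.zero_le _)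
      · omega
    · -- substring lies within row r
      have hval : ∀ t, t < len → rlin Emat (2 ^ k) (p + t) = Nat.testBit (c + t) r := by
        intro t ht
        have : p + t = r * 2 ^ k + (c + t) := by omega
        rw [this, eval_row _ _ (by omega)]
      set c0 := c % 2 ^ (r + 1) with hc0
      have hc0lt : c0 < 2 ^ (r + 1) := Nat.mod_lt _ (by omega)
      have hc0le : c0 ≤ c := Nat.mod_le _ _
      have hshift : ∀ t, Nat.testBit (c + t) r = Nat.testBit (c0 + t) r := by
        intro t
        rw [testBit_period (c + t), testBit_period (c0 + t)]
        congr 1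
        rw [hc0, Nat.mod_add_mod]
      by_cases hall0 : ∀ t, t < len → Nat.testBit (c + t) r = false
      · -- all-zero substring: place it at the start of row r
        have hc0r : c0 < 2 ^ r := by
          have := hall0 0 (by omega)
          rw [Nat.add_zero, testBit_period, ← hc0, testBit_of_lt hc0lt] at this
          simpa using this
        have hlen2 : len ≤ 2 ^ r - c0 := by
          by_contra hcon
          have ht : 2 ^ r - c0 < len := by omega
          have := hall0 (2 ^ r - c0) ht
          rw [hshift] at this
          have heq : c0 + (2 ^ r - c0) = 2 ^ r := by omega
          rw [heq, testBit_of_lt (by omega)] at this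
          simp at this
        refine ⟨r * 2 ^ k, by omega, ?_, r * 2 ^ k, mem_attrSet hrk (Or.inl rfl), le_refl _, by omega⟩
        intro t ht
        rw [hval t ht, hall0 t ht, eval_row _ _ (by omega), testBit_of_lt (by omega)]
        simp
        omega
      · by_cases hall1 : ∀ t, t < len → Nat.testBit (c + t) r = true
        · -- all-one substring: place it at column 2^r of row r
          have hc0r : 2 ^ r ≤ c0 := by
            have := hall1 0 (by omega)
            rw [Nat.add_zero, testBit_period, ← hc0, testBit_of_lt hc0lt] at this
            simpa using this
          have hlen2 : len ≤ 2 ^ (r + 1) - c0 := by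
            by_contra hcon
            have ht : 2 ^ (r + 1) - c0 < len := by omega
            have := hall1 (2 ^ (r + 1) - c0) ht
            rw [hshift] at this
            have heq : c0 + (2 ^ (r + 1) - c0) = 2 ^ (r + 1) := by omega
            rw [heq, testBit_period, Nat.mod_self, Nat.zero_testBit] at this
            simp at this
          refine ⟨r * 2 ^ k + 2 ^ r, by omega, ?_, r * 2 ^ k + 2 ^ r,
            mem_attrSet hrk (Or.inr (Or.inl rfl)), le_refl _, by omega⟩
          intro t ht
          have : r * 2 ^ k + 2 ^ r + t = r * 2 ^ k + (2 ^ r + t) := by omega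
          rw [hval t ht, hall1 t ht, this, eval_row _ _ (by omega), testBit_of_lt (by omega)]
          simp
        · -- mixed substring: shift by the period of row r
          push_neg at hall0 hall1
          obtain ⟨t1, ht1, hb1⟩ := hall0
          obtain ⟨t0, ht0, hb0⟩ := hall1
          simp only [ne_eq, Bool.not_eq_true] at hb0
          simp only [ne_eq, Bool.not_eq_false] at hb1
          have hveq : ∀ t, t < len →
              rlin Emat (2 ^ k) (r * 2 ^ k + c0 + t) = rlin Emat (2 ^ k) (p + t) := by
            intro t ht
            have h1 : r * 2 ^ k + c0 + t = r * 2 ^ k + (c0 + t) := by omega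
            rw [hval t ht, h1, eval_row _ _ (by omega), ← hshift]
          have hbnd : r * 2 ^ k + c0 + len ≤ k * 2 ^ k := by omega
          by_cases h0 : c0 = 0
          · exact ⟨r * 2 ^ k + c0, hbnd, hveq, r * 2 ^ k,
              mem_attrSet hrk (Or.inl rfl), by omega, by omega⟩
          · by_cases hmid : c0 ≤ 2 ^ r ∧ 2 ^ r < c0 + len
            · exact ⟨r * 2 ^ k + c0, hbnd, hveq, r * 2 ^ k + 2 ^ r,
                mem_attrSet hrk (Or.inr (Or.inl rfl)), by omega, by omega⟩
            · by_cases hend : 2 ^ (r + 1) ≤ c0 + len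
              · exact ⟨r * 2 ^ k + c0, hbnd, hveq, r * 2 ^ k + 2 ^ (r + 1) - 1,
                  mem_attrSet hrk (Or.inr (Or.inr rfl)), by omega, by omega⟩
              · -- impossible: the shifted substring would be constant
                exfalso
                rw [hshift] at hb0 hb1
                rcases Nat.lt_or_ge (2 ^ r) c0 with hcase | hcase
                · -- all ones
                  rw [testBit_of_lt (show c0 + t0 < 2 ^ (r + 1) by omega)] at hb0
                  simp at hb0
                  omega
                · -- all zeros
                  have : c0 + len ≤ 2 ^ r := by omega
                  rw [testBit_of_lt (show c0 + t1 < 2 ^ (r + 1) by omega)] at hb1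
                  simp at hb1
                  omega

lemma card17 (k : ℕ) : (attrSet k).card ≤ 3 * k := by
  -- cardinality bound
    calc (attrSet k).card ≤ ∑ i ∈ Finset.range k,
        ({i * 2 ^ k, i * 2 ^ k + 2 ^ i, i * 2 ^ k + 2 ^ (i + 1) - 1} : Finset ℕ).card :=
          Finset.card_biUnion_le
      _ ≤ ∑ _i ∈ Finset.range k, 3 := by
          refine Finset.sum_le_sum fun i _ => ?_
          refine le_trans (Finset.card_insert_le _ _) ?_
          refine Nat.succ_le_succ (le_trans (Finset.card_insert_le _ _) ?_)
          simp
      _ = 3 * k := by simp [Nat.mul_comm]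

theorem statement17 (k : ℕ) (hk : 1 ≤ k) :
    IsAttractor1D (rlin Emat (2 ^ k)) (k * 2 ^ k) (attrSet k) ∧
    (attrSet k).card ≤ 3 * k ∧
    gamma1D (rlin Emat (2 ^ k)) (k * 2 ^ k) ≤ 3 * k ∧
    (∀ Γ : Finset (ℕ × ℕ), IsAttractor Emat k (2 ^ k) Γ → 2 ^ k ≤ Γ.card) := by
  refine ⟨attr17 k hk, card17 k, ?_, ?_⟩
  · -- gamma bound
    refine le_trans (Nat.sInf_le ⟨attrSet k, ?_, rfl⟩) ?_
    · exact attr17 k hk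
    · exact card17 k
  · -- lower bound for 2D attractors
    intro Γ hΓ
    have hsub : Finset.range (2 ^ k) ⊆ Γ.image Prod.snd := by
      intro j hj
      rw [Finset.mem_range] at hj
      obtain ⟨i', j', hi', hj', heq, q, hq, hq1, hq2, hq3, hq4⟩ :=
        hΓ.2 k 1 0 j hk (le_refl 1) (by omega) (by omega)
      have hi'0 : i' = 0 := by omega
      have hjj : j' = j := by
        apply Nat.eq_of_testBit_eq
        intro a
        rcases Nat.lt_or_ge a k with ha | ha
        · have := heq a 0 ha (by omega)
          simpa [Emat, hi'0] using this
        · have h1 : j' < 2 ^ a := lt_of_lt_of_le (by omega) (Nat.pow_le_pow_right (by norm_num) ha)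
          have h2 : j < 2 ^ a := lt_of_lt_of_le hj (Nat.pow_le_pow_right (by norm_num) ha)
          rw [Nat.testBit_lt_two_pow h1, Nat.testBit_lt_two_pow h2]
      rw [Finset.mem_image]
      exact ⟨q, hq, by omega⟩
    calc 2 ^ k = (Finset.range (2 ^ k)).card := (Finset.card_range _).symm
      _ ≤ (Γ.image Prod.snd).card := Finset.card_le_card hsub
      _ ≤ Γ.card := Finset.card_image_le
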